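/- Suppose E and F are countable amplified directed graphs. If there exists a bijection ρ : ℋ(E ×₁ ℤ) → ℋ(F ×₁ ℤ) such that ρ and ρ⁻¹ preserve inclusion and ρ(lt_n^E(H)) = lt_n^F(ρ(H)) for all H ∈ ℋ(E ×₁ ℤ) and n ∈ ℤ, then there exists a bijection ρ̄ : ℋ(E ×₁ ℤ) → ℋ(F ×₁ ℤ) with the same properties that moreover satisfies ρ̄(H₀^E) = H₀^F. -/

import Mathlib

/-- A directed graph: a set of vertices, a set of edges, and range and source maps. -/
structure DirGraph where
  V : Type
  E : Type
  r : E → V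
  s : E → V

namespace DirGraph

variable (G : DirGraph)

/-- The skew-product graph `E ×₁ ℤ`. -/
def skew : DirGraph where
  V := G.V × ℤ
  E := G.E × ℤ
  r := fun e => (G.r e.1, e.2 + 1)
  s := fun e => (G.s e.1, e.2)

/-- `G.PathRel v w n` : there is a path of length `n` from `v` to `w`
(vertices are paths of length `0`). -/
inductive PathRel : G.V → G.V → ℕ → Prop
  | nil (v : G.V) : PathRel v v 0
  | cons (e : G.E) {w : G.V} {n : ℕ} : PathRel (G.r e) w n → PathRel (G.s e) w (n + 1)

/-- A set of vertices is hereditary if it contains the range of every edge whose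
source it contains. -/
def Hereditary (H : Set G.V) : Prop := ∀ e : G.E, G.s e ∈ H → G.r e ∈ H

/-- `H(v, n)`: the smallest hereditary subset of `(E ×₁ ℤ)⁰` containing `(v, n)`. -/
def Hgen (v : G.V) (n : ℤ) : Set (G.V × ℤ) :=
  ⋂₀ {K : Set (G.V × ℤ) | G.skew.Hereditary K ∧ (v, n) ∈ K}

/-- The translation action `lt_k(H) = {(v, n + k) : (v, n) ∈ H}`. -/
def lt (k : ℤ) (H : Set (G.V × ℤ)) : Set (G.V × ℤ) :=
  (fun p : G.V × ℤ => (p.1, p.2 + k)) '' H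

/-- The hereditary set `H₀ = {(v, n) : v ∈ E⁰, n ≥ 0}`. -/
def H0 : Set (G.V × ℤ) := {p | 0 ≤ p.2}

/-- A graph is amplified if for all vertices `v, w` the set `vE¹w` of edges from `v`
to `w` is empty or infinite. -/
def Amplified : Prop :=
  ∀ v w : G.V, {e : G.E | G.s e = v ∧ G.r e = w} = ∅ ∨ {e : G.E | G.s e = v ∧ G.r e = w}.Infinite

/-- A graph is connected if the smallest equivalence relation on the vertices containing
`{(s e, r e) : e ∈ E¹}` is everything. -/
def Connected : Prop :=
  ∀ v w : G.V, Relation.EqvGen (fun a b => ∃ e : G.E, G.s e = a ∧ G.r e = b) v w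

/-- `L` has a unique predecessor in the poset of hereditary subsets of `(E ×₁ ℤ)⁰`. -/
def UniquePred (L : Set (G.V × ℤ)) : Prop :=
  ∃ K : Set (G.V × ℤ), G.skew.Hereditary K ∧ K ⊂ L ∧
    ∀ K' : Set (G.V × ℤ), G.skew.Hereditary K' → K' ⊂ L → K' ⊆ K

/-- `ℋ_vert`: the hereditary subsets of `(E ×₁ ℤ)⁰` having a unique predecessor. -/
def HVert : Set (Set (G.V × ℤ)) := {L | G.skew.Hereditary L ∧ G.UniquePred L}

/-- `V₀ = {H(v, 0) : v ∈ E⁰}`. -/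
def V0 : Set (Set (G.V × ℤ)) := {L | ∃ v : G.V, L = G.Hgen v 0}


theorem lt_hereditary (k : ℤ) {H : Set (G.V × ℤ)}
    (hH : G.skew.Hereditary H) : G.skew.Hereditary (G.lt k H) := by
  rintro ⟨f, m⟩ hs
  obtain ⟨⟨v, n⟩, hvn, heq⟩ := hs
  have h1 : v = G.s f := congrArg Prod.fst heq
  have h2 : n + k = m := congrArg Prod.snd heq
  subst h1
  refine ⟨(G.r f, n + 1), hH (f, n) hvn, ?_⟩
  show ((G.r f : G.V), n + 1 + k) = (G.r f, m + 1)
  rw [Prod.ext_iff]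
  exact ⟨rfl, by omega⟩

theorem H0_hereditary : G.skew.Hereditary G.H0 := by
  rintro ⟨f, m⟩ hm
  have : 0 ≤ m := hm
  show 0 ≤ m + 1
  omega

/-- The hereditary subsets of the skew-product graph, as a type. -/
def HS := {L : Set (G.V × ℤ) // G.skew.Hereditary L}

/-- Translation on hereditary subsets of the skew product. -/
def ltH (k : ℤ) (A : G.HS) : G.HS := ⟨G.lt k A.1, G.lt_hereditary k A.2⟩

/-- `H₀` as an element of `G.HS`. -/
def H0H : G.HS := ⟨G.H0, G.H0_hereditary⟩

/-- The vertex set `Ē⁰` of the graph recovered from `(ℋ(E ×₁ ℤ), ⊆, lt, H₀)`. -/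
def Ebar0 : Set (Set (G.V × ℤ)) := {L | L ∈ G.HVert ∧ L ⊆ G.H0 ∧ ¬ L ⊆ G.lt 1 G.H0}

/-- The graph `Ē` recovered from `(ℋ(E ×₁ ℤ), ⊆, lt, H₀)`. -/
noncomputable def Ebar : DirGraph where
  V := G.Ebar0
  E := {t : Set (G.V × ℤ) × ℕ × Set (G.V × ℤ) //
          t.1 ∈ G.Ebar0 ∧ t.2.2 ∈ G.Ebar0 ∧ G.lt 1 t.2.2 ⊆ t.1}
  s := fun t => ⟨t.1.1, t.2.1⟩
  r := fun t => ⟨t.1.2.2, t.2.2.1⟩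


variable {G : DirGraph}

lemma pathRel_zero_eq {v w : G.V} (h : G.PathRel v w 0) : v = w := by
  cases h; rfl

lemma pathRel_snoc {v w : G.V} {k : ℕ} (h : G.PathRel v w k) (e : G.E) (he : G.s e = w) :
    G.PathRel v (G.r e) (k + 1) := by
  induction h with
  | nil v => subst he; exact PathRel.cons e (PathRel.nil _)
  | cons f _ ih => exact PathRel.cons f (ih he)

lemma hereditary_mem_of_pathRel {K : Set (G.V × ℤ)} (hK : G.skew.Hereditary K)
    {v w : G.V} {k : ℕ} (h : G.PathRel v w k) :
    ∀ n : ℤ, (v, n) ∈ K → (w, n + k) ∈ K := by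
  induction h with
  | nil v => intro n hn; simpa using hn
  | cons e h ih =>
      intro n hn
      have h1 : ((G.r e, n + 1) : G.V × ℤ) ∈ K := hK (e, n) hn
      have h2 := ih (n + 1) h1
      convert h2 using 2
      push_cast; ring

lemma Hgen_hereditary (v : G.V) (n : ℤ) : G.skew.Hereditary (G.Hgen v n) := by
  intro e he
  intro K hK
  exact hK.1 e (he K hK)

lemma mem_Hgen_self (v : G.V) (n : ℤ) : (v, n) ∈ G.Hgen v n :=
  fun _ hK => hK.2

lemma Hgen_min {K : Set (G.V × ℤ)} (hK : G.skew.Hereditary K) {v : G.V} {n : ℤ}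
    (hv : (v, n) ∈ K) : G.Hgen v n ⊆ K :=
  Set.sInter_subset_of_mem ⟨hK, hv⟩

lemma mem_Hgen_iff {v w : G.V} {n m : ℤ} :
    (w, m) ∈ G.Hgen v n ↔ ∃ k : ℕ, m = n + k ∧ G.PathRel v w k := by
  constructor
  · intro hmem
    have hS : G.skew.Hereditary {p : G.V × ℤ | ∃ k : ℕ, p.2 = n + k ∧ G.PathRel v p.1 k} := by
      rintro ⟨e, p⟩ ⟨k, hk, hpath⟩
      simp only [skew] at hk hpath ⊢
      exact ⟨k + 1, by push_cast; omega, pathRel_snoc hpath e rfl⟩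
    exact hmem _ ⟨hS, ⟨0, by simp, PathRel.nil v⟩⟩
  · rintro ⟨k, rfl, hpath⟩
    intro K hK
    exact hereditary_mem_of_pathRel hK.1 hpath n hK.2

lemma Hgen_subset_iff {v w : G.V} {n m : ℤ} :
    G.Hgen w m ⊆ G.Hgen v n ↔ (w, m) ∈ G.Hgen v n :=
  ⟨fun h => h (mem_Hgen_self w m), fun h => Hgen_min (Hgen_hereditary v n) h⟩

lemma Hgen_inj {v u : G.V} {n m : ℤ} (hEq : G.Hgen v n = G.Hgen u m) : v = u ∧ n = m := by
  have h1 : (u, m) ∈ G.Hgen v n := hEq ▸ mem_Hgen_self u m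
  have h2 : (v, n) ∈ G.Hgen u m := hEq ▸ mem_Hgen_self v n
  obtain ⟨k, hk, hp⟩ := mem_Hgen_iff.mp h1
  obtain ⟨k', hk', hp'⟩ := mem_Hgen_iff.mp h2
  have hk0 : k = 0 := by omega
  subst hk0
  exact ⟨pathRel_zero_eq hp, by omega⟩

lemma mem_lt_iff {k : ℤ} {H : Set (G.V × ℤ)} {p : G.V × ℤ} :
    p ∈ G.lt k H ↔ (p.1, p.2 - k) ∈ H := by
  constructor
  · rintro ⟨⟨v, n⟩, hv, rfl⟩; simpa using hv
  · intro hp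
    exact ⟨(p.1, p.2 - k), hp, by simp⟩

lemma lt_Hgen {k : ℤ} {v : G.V} {n : ℤ} : G.lt k (G.Hgen v n) = G.Hgen v (n + k) := by
  ext ⟨w, m⟩
  rw [mem_lt_iff]
  simp only [mem_Hgen_iff]
  constructor
  · rintro ⟨j, hj, hp⟩; exact ⟨j, by omega, hp⟩
  · rintro ⟨j, hj, hp⟩; exact ⟨j, by omega, hp⟩

/-- `Hgen` as an element of `HS`. -/
def HgenH (G : DirGraph) (v : G.V) (n : ℤ) : G.HS := ⟨G.Hgen v n, Hgen_hereditary v n⟩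

lemma ltH_HgenH {k : ℤ} {v : G.V} {n : ℤ} : G.ltH k (G.HgenH v n) = G.HgenH v (n + k) :=
  Subtype.ext lt_Hgen

lemma hereditary_iUnion {ι : Sort*} (A : ι → Set (G.V × ℤ))
    (hA : ∀ i, G.skew.Hereditary (A i)) : G.skew.Hereditary (⋃ i, A i) := by
  intro e he
  obtain ⟨S, ⟨i, rfl⟩, hmem⟩ := he
  exact Set.mem_iUnion.mpr ⟨i, hA i e hmem⟩

/-- The predecessor of `Hgen v n`. -/
def PredSet (G : DirGraph) (v : G.V) (n : ℤ) : Set (G.V × ℤ) := G.Hgen v n \ {(v, n)}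

lemma predSet_hereditary (v : G.V) (n : ℤ) : G.skew.Hereditary (G.PredSet v n) := by
  rintro ⟨e, p⟩ ⟨hmem, hne⟩
  simp only [skew] at hmem hne ⊢
  refine ⟨Hgen_hereditary v n (e, p) hmem, ?_⟩
  obtain ⟨k, hk, -⟩ := mem_Hgen_iff.mp hmem
  intro hcontra
  have : ((G.r e : G.V), (p + 1 : ℤ)) = (v, n) := hcontra
  have h2 : p + 1 = n := congrArg Prod.snd this
  omega

lemma predSet_max {K : Set (G.V × ℤ)} (hK : G.skew.Hereditary K) {v : G.V} {n : ℤ}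
    (h : K ⊂ G.Hgen v n) : K ⊆ G.PredSet v n := by
  intro x hx
  refine ⟨h.1 hx, ?_⟩
  intro hxe
  have hxe' : x = (v, n) := hxe
  subst hxe'
  exact h.2 (Hgen_min hK hx)

lemma predSet_eq_iUnion (v : G.V) (n : ℤ) :
    G.PredSet v n = ⋃ e : {e : G.E // G.s e = v}, G.Hgen (G.r e.1) (n + 1) := by
  ext ⟨w, m⟩
  constructor
  · rintro ⟨hmem, hne⟩
    obtain ⟨k, hk, hp⟩ := mem_Hgen_iff.mp hmem
    match k, hp with
    | 0, hp =>
        exfalso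
        obtain rfl := (pathRel_zero_eq hp).symm
        exact hne (by simp at hk ⊢; omega)
    | k + 1, hp =>
        cases hp with
        | cons e hp' =>
            exact Set.mem_iUnion.mpr ⟨⟨e, rfl⟩,
              mem_Hgen_iff.mpr ⟨k, by push_cast at hk ⊢; omega, hp'⟩⟩
  · intro hmem
    obtain ⟨⟨e, he⟩, hx⟩ := Set.mem_iUnion.mp hmem
    obtain ⟨k, hk, hp⟩ := mem_Hgen_iff.mp hx
    refine ⟨mem_Hgen_iff.mpr ⟨k + 1, by push_cast; omega, he ▸ PathRel.cons e hp⟩, ?_⟩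
    intro hcontra
    have h2 : m = n := congrArg Prod.snd hcontra
    omega

lemma predSet_ne (v : G.V) (n : ℤ) : G.PredSet v n ≠ G.Hgen v n := by
  intro h
  have : (v, n) ∈ G.PredSet v n := h ▸ mem_Hgen_self v n
  exact this.2 rfl

lemma predSet_ssubset (v : G.V) (n : ℤ) : G.PredSet v n ⊂ G.Hgen v n :=
  ⟨Set.diff_subset, fun h => predSet_ne v n (le_antisymm Set.diff_subset h)⟩

lemma rho_iUnion (G F : DirGraph) (ρ : G.HS ≃ F.HS)
    (hmono : ∀ A B : G.HS, A.1 ⊆ B.1 ↔ (ρ A).1 ⊆ (ρ B).1)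
    {ι : Sort*} (A : ι → G.HS) :
    (ρ ⟨⋃ i, (A i).1, hereditary_iUnion _ (fun i => (A i).2)⟩).1 = ⋃ i, (ρ (A i)).1 := by
  apply subset_antisymm
  · set C : F.HS := ⟨⋃ i, (ρ (A i)).1, hereditary_iUnion _ (fun i => (ρ (A i)).2)⟩ with hC
    have h1 : ∀ i, (A i).1 ⊆ (ρ.symm C).1 := by
      intro i
      have h := hmono (A i) (ρ.symm C)
      rw [ρ.apply_symm_apply] at h
      exact h.mpr (Set.subset_iUnion (fun i => (ρ (A i)).1) i)
    have h2 : (⋃ i, (A i).1) ⊆ (ρ.symm C).1 := Set.iUnion_subset h1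
    have h3 := (hmono ⟨⋃ i, (A i).1, hereditary_iUnion _ (fun i => (A i).2)⟩ (ρ.symm C)).mp h2
    rwa [ρ.apply_symm_apply] at h3
  · exact Set.iUnion_subset fun i =>
      (hmono (A i) _).mp (Set.subset_iUnion (fun i => (A i).1) i)

theorem side (G F : DirGraph) (ρ : G.HS ≃ F.HS)
    (hmono : ∀ A B : G.HS, A.1 ⊆ B.1 ↔ (ρ A).1 ⊆ (ρ B).1)
    (heqv : ∀ (n : ℤ) (A : G.HS), ρ (G.ltH n A) = F.ltH n (ρ A)) :
    ∃ (φ : G.V → F.V) (g : G.V → ℤ),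
      (∀ (v : G.V) (n : ℤ), ρ (G.HgenH v n) = F.HgenH (φ v) (n + g v)) ∧
      (∀ (v w : G.V) (k : ℕ), G.PathRel v w k ↔
        ∃ j : ℕ, (k : ℤ) + g w = g v + j ∧ F.PathRel (φ v) (φ w) j) ∧
      (∀ v : G.V, (⋃ e : {e : G.E // G.s e = v}, F.Hgen (φ (G.r e.1)) (1 + g (G.r e.1)))
            = ⋃ f : {f : F.E // F.s f = φ v}, F.Hgen (F.r f.1) (g v + 1)) := by
  have hmonoS : ∀ A B : G.HS, A.1 ⊂ B.1 ↔ (ρ A).1 ⊂ (ρ B).1 := by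
    intro A B
    constructor
    · rintro ⟨h1, h2⟩
      exact ⟨(hmono A B).mp h1, fun h => h2 ((hmono B A).mpr h)⟩
    · rintro ⟨h1, h2⟩
      exact ⟨(hmono A B).mpr h1, fun h => h2 ((hmono B A).mp h)⟩
  have step1 : ∀ v : G.V, ∃ (w : F.V) (m : ℤ), ρ (G.HgenH v 0) = F.HgenH w m := by
    intro v
    set L := ρ (G.HgenH v 0) with hL
    set Pv : G.HS := ⟨G.PredSet v 0, predSet_hereditary v 0⟩ with hPv
    have hKL : (ρ Pv).1 ⊂ L.1 := (hmonoS Pv (G.HgenH v 0)).mp (predSet_ssubset v 0)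
    obtain ⟨⟨w, m⟩, hxL, hxK⟩ := Set.exists_of_ssubset hKL
    refine ⟨w, m, ?_⟩
    have hsub : F.Hgen w m ⊆ L.1 := Hgen_min L.2 hxL
    by_cases heq : F.Hgen w m = L.1
    · exact Subtype.ext heq.symm
    · exfalso
      have hss : (F.HgenH w m).1 ⊂ L.1 := ⟨hsub, fun h => heq (le_antisymm hsub h)⟩
      -- pull back to G
      have hpull : (ρ.symm (F.HgenH w m)).1 ⊂ (G.HgenH v 0).1 := by
        have h := hmonoS (ρ.symm (F.HgenH w m)) (G.HgenH v 0)
        rw [ρ.apply_symm_apply] at h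
        exact h.mpr hss
      have h2 : (ρ.symm (F.HgenH w m)).1 ⊆ Pv.1 :=
        predSet_max (ρ.symm (F.HgenH w m)).2 hpull
      have h3 : (F.HgenH w m).1 ⊆ (ρ Pv).1 := by
        have h := hmono (ρ.symm (F.HgenH w m)) Pv
        rw [ρ.apply_symm_apply] at h
        exact h.mp h2
      exact hxK (h3 (mem_Hgen_self w m))
  choose φ g hφ0 using step1
  have hφ : ∀ (v : G.V) (n : ℤ), ρ (G.HgenH v n) = F.HgenH (φ v) (n + g v) := by
    intro v n
    have h1 : G.HgenH v n = G.ltH n (G.HgenH v 0) := by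
      rw [ltH_HgenH, zero_add]
    rw [h1, heqv, hφ0, ltH_HgenH, add_comm]
  refine ⟨φ, g, hφ, ?_, ?_⟩
  · intro v w k
    have h1 : G.PathRel v w k ↔ (G.HgenH w (k : ℤ)).1 ⊆ (G.HgenH v 0).1 := by
      show _ ↔ G.Hgen w (k : ℤ) ⊆ G.Hgen v 0
      rw [Hgen_subset_iff, mem_Hgen_iff]
      constructor
      · intro hp; exact ⟨k, by simp, hp⟩
      · rintro ⟨k', hk', hp⟩
        have : k' = k := by omega
        exact this ▸ hp
    rw [h1, hmono, hφ, hφ]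
    show F.Hgen (φ w) ((k : ℤ) + g w) ⊆ F.Hgen (φ v) (0 + g v) ↔ _
    rw [Hgen_subset_iff, mem_Hgen_iff]
    constructor
    · rintro ⟨j, hj, hp⟩; exact ⟨j, by omega, hp⟩
    · rintro ⟨j, hj, hp⟩; exact ⟨j, by omega, hp⟩
  · intro v
    set Pv : G.HS := ⟨G.PredSet v 0, predSet_hereditary v 0⟩ with hPv
    have hUnion : Pv = ⟨⋃ e : {e : G.E // G.s e = v}, (G.HgenH (G.r e.1) 1).1,
        hereditary_iUnion _ (fun e => (G.HgenH (G.r e.1) 1).2)⟩ := by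
      apply Subtype.ext
      show G.PredSet v 0 = _
      rw [predSet_eq_iUnion v 0]
      simp only [zero_add]
      rfl
    have hLHS : (⋃ e : {e : G.E // G.s e = v}, F.Hgen (φ (G.r e.1)) (1 + g (G.r e.1)))
        = (ρ Pv).1 := by
      rw [hUnion, rho_iUnion G F ρ hmono (fun e : {e : G.E // G.s e = v} => G.HgenH (G.r e.1) 1)]
      apply Set.iUnion_congr
      intro e
      rw [hφ]
      rfl
    have hRHS : (⋃ f : {f : F.E // F.s f = φ v}, F.Hgen (F.r f.1) (g v + 1))
        = F.PredSet (φ v) (g v) := (predSet_eq_iUnion (φ v) (g v)).symm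
    rw [hLHS, hRHS]
    -- (ρ Pv).1 = F.PredSet (φ v) (g v)
    apply subset_antisymm
    · have hss : (ρ Pv).1 ⊂ (ρ (G.HgenH v 0)).1 :=
        (hmonoS Pv (G.HgenH v 0)).mp (predSet_ssubset v 0)
      rw [hφ] at hss
      have := predSet_max (ρ Pv).2 (by simpa [HgenH] using hss)
      simpa using this
    · set Q : F.HS := ⟨F.PredSet (φ v) (g v), predSet_hereditary (φ v) (g v)⟩ with hQ
      have hssQ : Q.1 ⊂ (ρ (G.HgenH v 0)).1 := by
        rw [hφ]
        show F.PredSet (φ v) (g v) ⊂ F.Hgen (φ v) (0 + g v)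
        rw [zero_add]
        exact predSet_ssubset (φ v) (g v)
      have hpull : (ρ.symm Q).1 ⊂ (G.HgenH v 0).1 := by
        have h := hmonoS (ρ.symm Q) (G.HgenH v 0)
        rw [ρ.apply_symm_apply] at h
        exact h.mpr hssQ
      have h2 : (ρ.symm Q).1 ⊆ Pv.1 := predSet_max (ρ.symm Q).2 hpull
      have h3 := (hmono (ρ.symm Q) Pv).mp h2
      rwa [ρ.apply_symm_apply] at h3

lemma edge_const (G F : DirGraph) (φ : G.V → F.V) (ψ : F.V → G.V) (g : G.V → ℤ) (h : F.V → ℤ)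
    (hψφ : ∀ v, ψ (φ v) = v)
    (hgh : ∀ v, h (φ v) = - g v)
    (tr : ∀ (v w : G.V) (k : ℕ), G.PathRel v w k ↔
        ∃ j : ℕ, (k : ℤ) + g w = g v + j ∧ F.PathRel (φ v) (φ w) j)
    (tr' : ∀ (x y : F.V) (j : ℕ), F.PathRel x y j ↔
        ∃ k : ℕ, (j : ℤ) + h y = h x + k ∧ G.PathRel (ψ x) (ψ y) k)
    (star : ∀ v : G.V, (⋃ e : {e : G.E // G.s e = v}, F.Hgen (φ (G.r e.1)) (1 + g (G.r e.1)))
            = ⋃ f : {f : F.E // F.s f = φ v}, F.Hgen (F.r f.1) (g v + 1)) :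
    ∀ e : G.E, g (G.r e) = g (G.s e) := by
  have mono : ∀ e : G.E, g (G.s e) ≤ g (G.r e) := by
    intro e
    have hp : G.PathRel (G.s e) (G.r e) 1 := PathRel.cons e (PathRel.nil _)
    obtain ⟨j, hj, hpf⟩ := (tr _ _ 1).mp hp
    rcases Nat.eq_zero_or_pos j with hj0 | hj1
    · subst hj0
      have hvw : φ (G.s e) = φ (G.r e) := pathRel_zero_eq hpf
      have hsr : G.s e = G.r e := by rw [← hψφ (G.s e), hvw, hψφ]
      rw [hsr] at hj
      omega
    · omega
  intro e
  set v := G.s e with hv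
  set w := G.r e with hw
  by_contra hne
  have hd : g v + 1 ≤ g w := by have := mono e; rw [← hv, ← hw] at this; omega
  have h1 : (φ w, 1 + g w) ∈
      ⋃ e' : {e' : G.E // G.s e' = v}, F.Hgen (φ (G.r e'.1)) (1 + g (G.r e'.1)) :=
    Set.mem_iUnion.mpr ⟨⟨e, rfl⟩, mem_Hgen_self _ _⟩
  rw [star v] at h1
  obtain ⟨⟨f, hf⟩, hmem⟩ := Set.mem_iUnion.mp h1
  obtain ⟨k₁, hk₁, hp₁⟩ := mem_Hgen_iff.mp hmem
  have h2 : (F.r f, g v + 1) ∈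
      ⋃ f' : {f' : F.E // F.s f' = φ v}, F.Hgen (F.r f'.1) (g v + 1) :=
    Set.mem_iUnion.mpr ⟨⟨f, hf⟩, mem_Hgen_self _ _⟩
  rw [← star v] at h2
  obtain ⟨⟨e₂, he₂⟩, hmem₂⟩ := Set.mem_iUnion.mp h2
  obtain ⟨k₂, hk₂, hp₂⟩ := mem_Hgen_iff.mp hmem₂
  set u := G.r e₂ with hu
  have hgu : g v ≤ g u := by have := mono e₂; rw [he₂] at this; exact this
  have hk₂0 : k₂ = 0 := by omega
  subst hk₂0
  have huu : φ u = F.r f := pathRel_zero_eq hp₂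
  have hgu' : g u = g v := by simp at hk₂; omega
  rw [← huu] at hp₁
  obtain ⟨k₃, hk₃, hp₃⟩ := (tr' _ _ k₁).mp hp₁
  rw [hgh u, hgh w] at hk₃
  rw [hψφ u, hψφ w] at hp₃
  have hk₃0 : k₃ = 0 := by omega
  subst hk₃0
  have huw : u = w := pathRel_zero_eq hp₃
  rw [huw] at hgu'
  exact hne hgu'

end DirGraph

open DirGraph

theorem iso_carrying_H0 (G F : DirGraph)
    [Countable G.V] [Countable G.E] [Countable F.V] [Countable F.E]
    (hG : G.Amplified) (hF : F.Amplified)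
    (ρ : G.HS ≃ F.HS)
    (hmono : ∀ A B : G.HS, A.1 ⊆ B.1 ↔ (ρ A).1 ⊆ (ρ B).1)
    (heqv : ∀ (n : ℤ) (A : G.HS), ρ (G.ltH n A) = F.ltH n (ρ A)) :
    ∃ ρ' : G.HS ≃ F.HS,
      (∀ A B : G.HS, A.1 ⊆ B.1 ↔ (ρ' A).1 ⊆ (ρ' B).1) ∧
      (∀ (n : ℤ) (A : G.HS), ρ' (G.ltH n A) = F.ltH n (ρ' A)) ∧
      ρ' G.H0H = F.H0H := by
  obtain ⟨φ, g, hφ, tr, star⟩ := side G F ρ hmono heqv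
  have hmono' : ∀ A B : F.HS, A.1 ⊆ B.1 ↔ (ρ.symm A).1 ⊆ (ρ.symm B).1 := by
    intro A B
    have h := hmono (ρ.symm A) (ρ.symm B)
    rw [ρ.apply_symm_apply, ρ.apply_symm_apply] at h
    exact h.symm
  have heqv' : ∀ (n : ℤ) (A : F.HS), ρ.symm (F.ltH n A) = G.ltH n (ρ.symm A) := by
    intro n A
    apply ρ.injective
    rw [ρ.apply_symm_apply, heqv, ρ.apply_symm_apply]
  obtain ⟨ψ, h, hψ, tr', star'⟩ := side F G ρ.symm hmono' heqv'
  have hinv : ∀ v : G.V, ψ (φ v) = v ∧ g v + h (φ v) = 0 := by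
    intro v
    have h1 : ρ.symm (ρ (G.HgenH v 0)) = G.HgenH v 0 := ρ.symm_apply_apply _
    rw [hφ v 0, hψ (φ v) (0 + g v)] at h1
    have h2 := Hgen_inj (congrArg Subtype.val h1)
    exact ⟨h2.1, by omega⟩
  have hinv' : ∀ w : F.V, φ (ψ w) = w ∧ h w + g (ψ w) = 0 := by
    intro w
    have h1 : ρ (ρ.symm (F.HgenH w 0)) = F.HgenH w 0 := ρ.apply_symm_apply _
    rw [hψ w 0, hφ (ψ w) (0 + h w)] at h1
    have h2 := Hgen_inj (congrArg Subtype.val h1)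
    exact ⟨h2.1, by omega⟩
  have hψφ : ∀ v, ψ (φ v) = v := fun v => (hinv v).1
  have hφψ : ∀ w, φ (ψ w) = w := fun w => (hinv' w).1
  have hgh : ∀ v, h (φ v) = - g v := fun v => by have := (hinv v).2; omega
  have hgh' : ∀ w, g (ψ w) = - h w := fun w => by have := (hinv' w).2; omega
  have hEg : ∀ e : G.E, g (G.r e) = g (G.s e) :=
    edge_const G F φ ψ g h hψφ hgh tr tr' star
  have hEh : ∀ f : F.E, h (F.r f) = h (F.s f) :=
    edge_const F G ψ φ h g hφψ hgh' tr' tr star'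
  have pg : ∀ {v w : G.V} {k : ℕ}, G.PathRel v w k → g w = g v := by
    intro v w k hp
    induction hp with
    | nil v => rfl
    | cons e _ ih => rw [ih, hEg]
  have ph : ∀ {x y : F.V} {k : ℕ}, F.PathRel x y k → h y = h x := by
    intro x y k hp
    induction hp with
    | nil x => rfl
    | cons f _ ih => rw [ih, hEh]
  -- clean transfer of paths
  have T : ∀ (v w : G.V) (k : ℕ), G.PathRel v w k ↔ F.PathRel (φ v) (φ w) k := by
    intro v w k
    constructor
    · intro hp
      obtain ⟨j, hj, hpf⟩ := (tr v w k).mp hp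
      have hg : g w = g v := pg hp
      have hjk : j = k := by omega
      exact hjk ▸ hpf
    · intro hpf
      obtain ⟨k₃, hk₃, hp₃⟩ := (tr' _ _ k).mp hpf
      rw [hψφ, hψφ] at hp₃
      have hg : g w = g v := pg hp₃
      have hh : h (φ w) = h (φ v) := by rw [hgh, hgh, hg]
      have hkk : k₃ = k := by omega
      exact hkk ▸ hp₃
  -- the corrected bijection
  set ΦS : G.HS → Set (F.V × ℤ) := fun A => {q | ∃ p ∈ A.1, q ∈ F.Hgen (φ p.1) p.2} with hΦS
  have ΦH : ∀ A : G.HS, F.skew.Hereditary (ΦS A) := by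
    intro A
    rintro ⟨f, m⟩ ⟨p, hp, hq⟩
    exact ⟨p, hp, Hgen_hereditary _ _ (f, m) hq⟩
  set ΨS : F.HS → Set (G.V × ℤ) := fun B => {p | (φ p.1, p.2) ∈ B.1} with hΨS
  have ΨH : ∀ B : F.HS, G.skew.Hereditary (ΨS B) := by
    intro B
    rintro ⟨e, n⟩ hmem
    have hmem' : (φ (G.s e), n) ∈ B.1 := hmem
    have hp1 : F.PathRel (φ (G.s e)) (φ (G.r e)) 1 :=
      (T _ _ 1).mp (PathRel.cons e (PathRel.nil _))
    have h2 := hereditary_mem_of_pathRel B.2 hp1 n hmem'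
    show (φ (G.r e), n + 1) ∈ B.1
    simpa using h2
  refine ⟨⟨fun A => ⟨ΦS A, ΦH A⟩, fun B => ⟨ΨS B, ΨH B⟩, ?_, ?_⟩, ?_, ?_, ?_⟩
  · -- left inverse
    intro A
    apply Subtype.ext
    ext ⟨v, n⟩
    show (φ v, n) ∈ ΦS A ↔ (v, n) ∈ A.1
    constructor
    · rintro ⟨⟨w, m⟩, hw, hq⟩
      obtain ⟨k, hk, hpf⟩ := mem_Hgen_iff.mp hq
      have hpg : G.PathRel w v k := (T w v k).mpr hpf
      have h2 := hereditary_mem_of_pathRel A.2 hpg m hw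
      rw [hk]; exact h2
    · intro hv
      exact ⟨(v, n), hv, mem_Hgen_self _ _⟩
  · -- right inverse
    intro B
    apply Subtype.ext
    ext ⟨x, m⟩
    show ((x, m) ∈ ΦS ⟨ΨS B, ΨH B⟩) ↔ (x, m) ∈ B.1
    constructor
    · rintro ⟨⟨v, n⟩, hv, hq⟩
      have hv' : (φ v, n) ∈ B.1 := hv
      obtain ⟨k, hk, hpf⟩ := mem_Hgen_iff.mp hq
      have h2 := hereditary_mem_of_pathRel B.2 hpf n hv'
      rw [hk]; exact h2
    · intro hx
      refine ⟨(ψ x, m), ?_, ?_⟩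
      · show (φ (ψ x), m) ∈ B.1
        rw [hφψ]; exact hx
      · show (x, m) ∈ F.Hgen (φ (ψ x)) m
        rw [hφψ]; exact mem_Hgen_self x m
  · -- monotone both ways
    intro A B
    constructor
    · rintro hAB q ⟨p, hp, hq⟩
      exact ⟨p, hAB hp, hq⟩
    · intro hsub
      rintro ⟨v, n⟩ hp
      have h1 : (φ v, n) ∈ ΦS A := ⟨(v, n), hp, mem_Hgen_self _ _⟩
      obtain ⟨⟨w, m⟩, hw, hq⟩ := hsub h1
      obtain ⟨k, hk, hpf⟩ := mem_Hgen_iff.mp hq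
      have hpg : G.PathRel w v k := (T w v k).mpr hpf
      have h2 := hereditary_mem_of_pathRel B.2 hpg m hw
      rw [hk]; exact h2
  · -- equivariance
    intro n A
    apply Subtype.ext
    ext ⟨x, m⟩
    show ((x, m) ∈ ΦS (G.ltH n A)) ↔ (x, m) ∈ F.lt n (ΦS A)
    rw [mem_lt_iff]
    constructor
    · rintro ⟨⟨v, t⟩, hvt, hq⟩
      have hvt' : (v, t - n) ∈ A.1 := mem_lt_iff.mp hvt
      obtain ⟨k, hk, hpf⟩ := mem_Hgen_iff.mp hq
      exact ⟨(v, t - n), hvt', mem_Hgen_iff.mpr ⟨k, by omega, hpf⟩⟩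
    · rintro ⟨⟨v, t⟩, hvt, hq⟩
      obtain ⟨k, hk, hpf⟩ := mem_Hgen_iff.mp hq
      refine ⟨(v, t + n), mem_lt_iff.mpr (by simpa using hvt), ?_⟩
      exact mem_Hgen_iff.mpr ⟨k, by omega, hpf⟩
  · -- carries H0 to H0
    apply Subtype.ext
    ext ⟨x, m⟩
    show ((x, m) ∈ ΦS G.H0H) ↔ (0 ≤ m)
    constructor
    · rintro ⟨⟨v, t⟩, ht, hq⟩
      have ht' : (0 : ℤ) ≤ t := ht
      obtain ⟨k, hk, -⟩ := mem_Hgen_iff.mp hq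
      omega
    · intro hm
      refine ⟨(ψ x, m), hm, ?_⟩
      show (x, m) ∈ F.Hgen (φ (ψ x)) m
      rw [hφψ]; exact mem_Hgen_self x m
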